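/- arXiv:2012.12576 — 8 statements merged into one kernel-verified Lean document; each statement's English description precedes it below -/
import Mathlib

section
/- A morphism f = (f_T, f_W) of coisotropic index sets is a regular epimorphism in the category of coisotropic index sets if and only if f_T and f_W are surjective and f_W(M_0) = N_0. -/
/-! Coisotropic index sets and their morphisms. -/

universe u

structure CoisoSet : Type (u + 1) where
  T : Type u
  W : Type u
  N : Set W
  str : W → T

structure CoisoSetHom (M P : CoisoSet.{u}) : Type u where
  T : M.T → P.T
  W : M.W → P.W
  comm : ∀ x : M.W, T (M.str x) = P.str (W x)
  null : ∀ x ∈ M.N, W x ∈ P.N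

def CoisoSetHom.id (M : CoisoSet) : CoisoSetHom M M :=
  ⟨fun x => x, fun x => x, fun _ => rfl, fun _ h => h⟩

def CoisoSetHom.comp {M P Q : CoisoSet} (g : CoisoSetHom P Q)
    (f : CoisoSetHom M P) : CoisoSetHom M Q :=
  ⟨g.T ∘ f.T, g.W ∘ f.W,
    fun x => by simp only [Function.comp_apply, f.comm, g.comm],
    fun x hx => g.null _ (f.null _ hx)⟩

/-- `Φ` is a coequalizer of the parallel pair `(a, b)`. -/
def IsCoequalizerOf {M P G : CoisoSet} (Φ : CoisoSetHom M P)
    (a b : CoisoSetHom G M) : Prop :=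
  Φ.comp a = Φ.comp b ∧
    ∀ (H : CoisoSet) (h : CoisoSetHom M H), h.comp a = h.comp b →
      ∃! u : CoisoSetHom P H, u.comp Φ = h

/-- A regular epimorphism is a morphism arising as a coequalizer of some
parallel pair. -/
def IsRegularEpi {M P : CoisoSet} (Φ : CoisoSetHom M P) : Prop :=
  ∃ (G : CoisoSet) (a b : CoisoSetHom G M), IsCoequalizerOf Φ a b

lemma CoisoSetHom.ext' {M P : CoisoSet} {g h : CoisoSetHom M P}
    (hT : g.T = h.T) (hW : g.W = h.W) : g = h := by
  cases g; cases h; simp_all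

lemma CoisoSetHom.comp_assoc {M P Q R : CoisoSet} (h : CoisoSetHom Q R)
    (g : CoisoSetHom P Q) (f : CoisoSetHom M P) :
    (h.comp g).comp f = h.comp (g.comp f) := rfl

/-- A regular epi is an epi. -/
lemma IsRegularEpi.epi {M P : CoisoSet} {f : CoisoSetHom M P}
    (hf : IsRegularEpi f) {H : CoisoSet} {u v : CoisoSetHom P H}
    (huv : u.comp f = v.comp f) : u = v := by
  obtain ⟨G, a, b, hab, huniv⟩ := hf
  have h1 : (u.comp f).comp a = (u.comp f).comp b := by
    rw [CoisoSetHom.comp_assoc, CoisoSetHom.comp_assoc, hab]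
  obtain ⟨w, -, hwuniq⟩ := huniv H (u.comp f) h1
  exact (hwuniq u rfl).trans (hwuniq v huv.symm).symm

theorem coisoSetHom_regularEpi_iff_aux {M P : CoisoSet.{u}} (f : CoisoSetHom M P) :
    IsRegularEpi f ↔
      Function.Surjective f.T ∧ Function.Surjective f.W ∧
        f.W '' M.N = P.N := by
  constructor
  · intro hf
    -- surjectivity of f.T
    have hT : Function.Surjective f.T := by
      set H : CoisoSet.{u} := ⟨Set PUnit, Set PUnit, Set.univ, fun s => s⟩
      set u1 : CoisoSetHom P H :=
        ⟨fun _ => Set.univ, fun _ => Set.univ, fun _ => rfl, fun _ _ => Set.mem_univ _⟩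
      set u2 : CoisoSetHom P H :=
        ⟨fun t => {_x | t ∈ Set.range f.T}, fun w => {_x | P.str w ∈ Set.range f.T},
          fun _ => rfl, fun _ _ => Set.mem_univ _⟩
      have heq : u1 = u2 := by
        apply hf.epi
        apply CoisoSetHom.ext'
        · funext m
          show (Set.univ : Set PUnit) = {_x | f.T m ∈ Set.range f.T}
          simp [Set.eq_univ_iff_forall]
        · funext m
          show (Set.univ : Set PUnit) = {_x | P.str (f.W m) ∈ Set.range f.T}
          refine (Set.eq_univ_of_forall fun _ => ?_).symm
          exact ⟨M.str m, (f.comm m)⟩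
      intro t
      have : (Set.univ : Set PUnit) = {_x | t ∈ Set.range f.T} :=
        congrFun (congrArg CoisoSetHom.T heq) t
      have := this ▸ Set.mem_univ (PUnit.unit : PUnit)
      exact this
    have hW : Function.Surjective f.W := by
      set H : CoisoSet.{u} := ⟨PUnit, Set PUnit, Set.univ, fun _ => PUnit.unit⟩
      set u1 : CoisoSetHom P H :=
        ⟨fun _ => PUnit.unit, fun _ => Set.univ, fun _ => rfl, fun _ _ => Set.mem_univ _⟩
      set u2 : CoisoSetHom P H :=
        ⟨fun _ => PUnit.unit, fun w => {_x | w ∈ Set.range f.W},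
          fun _ => rfl, fun _ _ => Set.mem_univ _⟩
      have heq : u1 = u2 := by
        apply hf.epi
        apply CoisoSetHom.ext'
        · rfl
        · funext m
          show (Set.univ : Set PUnit) = {_x | f.W m ∈ Set.range f.W}
          simp [Set.eq_univ_iff_forall]
      intro w
      have : (Set.univ : Set PUnit) = {_x | w ∈ Set.range f.W} :=
        congrFun (congrArg CoisoSetHom.W heq) w
      have h2 := this ▸ Set.mem_univ (PUnit.unit : PUnit)
      exact h2
    refine ⟨hT, hW, ?_⟩
    apply Set.Subset.antisymm
    · rintro _ ⟨m, hm, rfl⟩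
      exact f.null m hm
    · -- P.N ⊆ f.W '' M.N, using coequalizer with modified codomain
      obtain ⟨G, a, b, hab, huniv⟩ := hf
      set H : CoisoSet.{u} := ⟨P.T, P.W, f.W '' M.N, P.str⟩
      set h : CoisoSetHom M H :=
        ⟨f.T, f.W, f.comm, fun m hm => ⟨m, hm, rfl⟩⟩
      have hcomm : h.comp a = h.comp b := by
        apply CoisoSetHom.ext'
        · have := congrArg CoisoSetHom.T hab; exact this
        · have := congrArg CoisoSetHom.W hab; exact this
      obtain ⟨u, hu, -⟩ := huniv H h hcomm
      have huT : ∀ p, u.T (f.T p) = f.T p := fun p =>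
        congrFun (congrArg CoisoSetHom.T hu) p
      have huW : ∀ p, u.W (f.W p) = f.W p := fun p =>
        congrFun (congrArg CoisoSetHom.W hu) p
      intro w hw
      obtain ⟨m, rfl⟩ := hW w
      have := u.null (f.W m) hw
      rwa [huW] at this
  · rintro ⟨hT, hW, hN⟩
    -- kernel pair
    set G : CoisoSet.{u} :=
      ⟨{p : M.T × M.T // f.T p.1 = f.T p.2},
       {p : M.W × M.W // f.W p.1 = f.W p.2},
       {p | p.val.1 ∈ M.N ∧ p.val.2 ∈ M.N},
       fun p => ⟨(M.str p.val.1, M.str p.val.2), by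
         rw [f.comm, f.comm, p.property]⟩⟩
    set a : CoisoSetHom G M :=
      ⟨fun p => p.val.1, fun p => p.val.1, fun _ => rfl, fun _ hp => hp.1⟩
    set b : CoisoSetHom G M :=
      ⟨fun p => p.val.2, fun p => p.val.2, fun _ => rfl, fun _ hp => hp.2⟩
    refine ⟨G, a, b, ?_, ?_⟩
    · apply CoisoSetHom.ext'
      · funext p; exact p.property
      · funext p; exact p.property
    · intro H h hcomm
      have hTag : ∀ m m', f.T m = f.T m' → h.T m = h.T m' := by
        intro m m' hmm
        exact congrFun (congrArg CoisoSetHom.T hcomm) ⟨(m, m'), hmm⟩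
      have hWag : ∀ m m', f.W m = f.W m' → h.W m = h.W m' := by
        intro m m' hmm
        exact congrFun (congrArg CoisoSetHom.W hcomm) ⟨(m, m'), hmm⟩
      set sT := Function.surjInv hT with hsT
      set sW := Function.surjInv hW with hsW
      have hsT' : ∀ t, f.T (sT t) = t := Function.surjInv_eq hT
      have hsW' : ∀ w, f.W (sW w) = w := Function.surjInv_eq hW
      set u : CoisoSetHom P H :=
        ⟨h.T ∘ sT, h.W ∘ sW,
          fun w => by
            show h.T (sT (P.str w)) = H.str (h.W (sW w))
            have : f.T (sT (P.str w)) = f.T (M.str (sW w)) := by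
              rw [hsT', f.comm, hsW']
            rw [hTag _ _ this, h.comm],
          fun w hw => by
            rw [← hN] at hw
            obtain ⟨m, hm, hmw⟩ := hw
            show h.W (sW w) ∈ H.N
            have : f.W (sW w) = f.W m := by rw [hsW', hmw]
            rw [hWag _ _ this]
            exact h.null m hm⟩ with hu
      refine ⟨u, ?_, ?_⟩
      · apply CoisoSetHom.ext'
        · funext m
          show h.T (sT (f.T m)) = h.T m
          exact hTag _ _ (hsT' _)
        · funext m
          show h.W (sW (f.W m)) = h.W m
          exact hWag _ _ (hsW' _)
      · intro v hv
        apply CoisoSetHom.ext'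
        · funext t
          obtain ⟨m, rfl⟩ := hT t
          calc v.T (f.T m) = h.T m := congrFun (congrArg CoisoSetHom.T hv) m
            _ = u.T (f.T m) := (hTag _ _ (hsT' _)).symm
        · funext w
          obtain ⟨m, rfl⟩ := hW w
          calc v.W (f.W m) = h.W m := congrFun (congrArg CoisoSetHom.W hv) m
            _ = u.W (f.W m) := (hWag _ _ (hsW' _)).symm

/-- a morphism of coisotropic index sets is a regular
epimorphism iff both components are surjective and the Wobs-component maps
the null set onto the null set. -/
theorem coisoSetHom_regularEpi_iff {M P : CoisoSet} (f : CoisoSetHom M P) :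
    IsRegularEpi f ↔
      Function.Surjective f.T ∧ Function.Surjective f.W ∧
        f.W '' M.N = P.N :=
  coisoSetHom_regularEpi_iff_aux f
end

section
/- Let A be a coisotropic algebra and M a coisotropic index set. Then the triple A^(M) with Total-component the free A_T-module on M_T, Wobs-component the free A_W-module on M_W, and Null-component A_W^(M_0) + A_0^(M_W) inside A_W^(M_W), together with the map sending the basis element indexed by m ∈ M_W to the basis element indexed by ι_M(m) (extended along ι_A), is a coisotropic right A-module; moreover it satisfies the universal property: for every coisotropic A-module E and every morphism φ : M → E of coisotropic index sets (where E is regarded as a coisotropic index set by forgetting structure) there is a unique morphism Φ : A^(M) → E of coisotropic A-modules extending φ. -/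
/-! Coisotropic index sets and their morphisms. -/

universe u

/-! Coisotropic algebras and coisotropic (right) modules over them.
Following the paper, a coisotropic algebra is a triple `(A_T, A_W, A_0)`
of unital `k`-algebras with a two-sided ideal `A_0 ⊆ A_W` and a unital
algebra morphism `ι : A_W → A_T`.  Modules are formalized with Lean's
(left) module conventions. -/

structure CoisoAlg (k : Type u) [CommRing k] : Type (u + 1) where
  T : Type u
  W : Type u
  [ringT : Ring T]
  [ringW : Ring W]
  [algT : Algebra k T]
  [algW : Algebra k W]
  /-- `N` is a left ideal ... -/
  N : Ideal W
  /-- ... which is also a right ideal, hence two-sided. -/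
  N_mul_right : ∀ x ∈ N, ∀ a : W, x * a ∈ N
  str : W →ₐ[k] T

attribute [instance] CoisoAlg.ringT CoisoAlg.ringW CoisoAlg.algT CoisoAlg.algW

variable {k : Type u} [CommRing k]

/-- A coisotropic module over the coisotropic algebra `A`. -/
structure CoisoRMod (A : CoisoAlg k) : Type (u + 1) where
  T : Type u
  W : Type u
  [addT : AddCommGroup T]
  [addW : AddCommGroup W]
  [modT : Module A.T T]
  [modW : Module A.W W]
  N : Submodule A.W W
  null_smul : ∀ a ∈ A.N, ∀ x : W, a • x ∈ N
  str : W → T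
  str_add : ∀ x y : W, str (x + y) = str x + str y
  str_smul : ∀ (a : A.W) (x : W), str (a • x) = A.str a • str x

attribute [instance] CoisoRMod.addT CoisoRMod.addW CoisoRMod.modT CoisoRMod.modW

variable {A : CoisoAlg k}

theorem CoisoRMod.str_zero (E : CoisoRMod A) : E.str 0 = 0 := by
  have h := E.str_add 0 0
  rw [add_zero] at h
  exact (left_eq_add.mp h)

/-- Morphisms of coisotropic modules over `A`. -/
structure CoisoRModHom (E F : CoisoRMod A) : Type u where
  T : E.T →ₗ[A.T] F.T
  W : E.W →ₗ[A.W] F.W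
  comm : ∀ x : E.W, T (E.str x) = F.str (W x)
  null : ∀ x ∈ E.N, W x ∈ F.N

theorem CoisoRModHom.ext' {E F : CoisoRMod A} {f g : CoisoRModHom E F}
    (h1 : f.T = g.T) (h2 : f.W = g.W) : f = g := by
  cases f; cases g; cases h1; cases h2; rfl

def CoisoRModHom.id (E : CoisoRMod A) : CoisoRModHom E E :=
  ⟨LinearMap.id, LinearMap.id, fun _ => rfl, fun _ h => h⟩

def CoisoRModHom.comp {E F G : CoisoRMod A} (g : CoisoRModHom F G)
    (f : CoisoRModHom E F) : CoisoRModHom E G :=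
  ⟨g.T ∘ₗ f.T, g.W ∘ₗ f.W,
    fun x => by simp only [LinearMap.comp_apply, f.comm, g.comm],
    fun x hx => g.null _ (f.null _ hx)⟩

/-- Regular epimorphisms of coisotropic modules: both components surjective
and the null submodule mapped onto the null submodule. -/
def IsRegEpiMod {E F : CoisoRMod A} (Φ : CoisoRModHom E F) : Prop :=
  Function.Surjective Φ.T ∧ Function.Surjective Φ.W ∧
    ∀ y ∈ F.N, ∃ x ∈ E.N, Φ.W x = y

/-- A coisotropic module is regular projective if morphisms out of it lift
along regular epimorphisms. -/
def RegProjective (P : CoisoRMod A) : Prop :=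
  ∀ (E F : CoisoRMod A) (Φ : CoisoRModHom E F) (Ψ : CoisoRModHom P F),
    IsRegEpiMod Φ → ∃ χ : CoisoRModHom P E, Φ.comp χ = Ψ

/-- Isomorphisms of coisotropic modules. -/
def IsIsoMod {E F : CoisoRMod A} (Φ : CoisoRModHom E F) : Prop :=
  ∃ Ψ : CoisoRModHom F E,
    Φ.comp Ψ = CoisoRModHom.id F ∧ Ψ.comp Φ = CoisoRModHom.id E

/-- The free coisotropic `A`-module on a coisotropic index set `M`. -/
noncomputable def freeMod (A : CoisoAlg k) (M : CoisoSet.{u}) : CoisoRMod A where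
  T := M.T →₀ A.T
  W := M.W →₀ A.W
  N :=
    { carrier := {f : M.W →₀ A.W | ∀ m, m ∉ M.N → f m ∈ A.N}
      add_mem' := fun hf hg m hm => by
        simpa [Finsupp.add_apply] using A.N.add_mem (hf m hm) (hg m hm)
      zero_mem' := fun m hm => by simp
      smul_mem' := fun a f hf m hm => by
        simpa [Finsupp.smul_apply] using A.N.smul_mem a (hf m hm) }
  null_smul := fun a ha f m hm => by
    simpa [Finsupp.smul_apply, smul_eq_mul] using A.N_mul_right a ha (f m)
  str := fun f => f.sum fun m a => Finsupp.single (M.str m) (A.str a)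
  str_add := fun f g =>
    Finsupp.sum_add_index' (fun m => by simp) (fun m a b => by
      simp [map_add, Finsupp.single_add])
  str_smul := fun a f => by
    classical
    show (a • f).sum (fun m b => Finsupp.single (M.str m) (A.str b)) =
      A.str a • f.sum (fun m b => Finsupp.single (M.str m) (A.str b))
    rw [Finsupp.sum_smul_index (fun m => by simp), Finsupp.smul_sum]
    refine Finsupp.sum_congr ?_
    intro m _
    rw [map_mul]
    exact (Finsupp.smul_single' _ _ _).symm

/-- `A` as a coisotropic module over itself. -/
def selfMod (A : CoisoAlg k) : CoisoRMod A where
  T := A.T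
  W := A.W
  N := A.N
  null_smul := fun a ha x => by
    simpa [smul_eq_mul] using A.N_mul_right a ha x
  str := A.str
  str_add := fun x y => map_add _ x y
  str_smul := fun a x => by simp [smul_eq_mul, map_mul]

/-- The coisotropic index set underlying a coisotropic module. -/
def toCoisoSet (E : CoisoRMod A) : CoisoSet.{u} :=
  ⟨E.T, E.W, (E.N : Set E.W), E.str⟩


/-- `E.str` as an additive monoid hom. -/
def CoisoRMod.strAddHom (E : CoisoRMod A) : E.W →+ E.T where
  toFun := E.str
  map_zero' := E.str_zero
  map_add' := E.str_add

theorem freeMod_W_eq (M : CoisoSet.{u}) :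
    (freeMod A M).W = (M.W →₀ A.W) := rfl

/-- (the construction `freeMod` above witnesses that the
triple `A^(M)` with null component `A_W^(M_0) + A_0^(M_W)` is a coisotropic
`A`-module;) the free coisotropic module `A^(M)` satisfies the universal
property: every morphism of coisotropic index sets from `M` to (the index
set underlying) a coisotropic `A`-module `E` extends uniquely to a morphism
of coisotropic `A`-modules `A^(M) → E`. -/
theorem freeMod_universal (A : CoisoAlg k) (M : CoisoSet.{u})
    (E : CoisoRMod A) (φ : CoisoSetHom M (toCoisoSet E)) :
    ∃! Φ : CoisoRModHom (freeMod A M) E,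
      (∀ t : M.T, Φ.T (Finsupp.single t 1) = φ.T t) ∧
      (∀ m : M.W, Φ.W (Finsupp.single m 1) = φ.W m) := by
  classical
  let ψT : M.T → E.T := φ.T
  let ψW : M.W → E.W := φ.W
  have hψ : ∀ m : M.W, ψT (M.str m) = E.str (ψW m) := φ.comm
  have hψN : ∀ m ∈ M.N, ψW m ∈ E.N := φ.null
  refine ⟨⟨Finsupp.linearCombination A.T ψT, Finsupp.linearCombination A.W ψW,
      ?_, ?_⟩, ⟨?_, ?_⟩, ?_⟩
  · -- comm
    intro (f : M.W →₀ A.W)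
    show Finsupp.linearCombination A.T ψT
        (f.sum fun m a => Finsupp.single (M.str m) (A.str a)) =
      E.str (Finsupp.linearCombination A.W ψW f)
    rw [map_finsuppSum, Finsupp.linearCombination_apply,
      show E.str = ⇑E.strAddHom from rfl, map_finsuppSum]
    let f' : M.W →₀ A.W := f
    refine Finsupp.sum_congr ?_
    intro m _
    show Finsupp.linearCombination A.T ψT (Finsupp.single (M.str m) (A.str (f' m)))
      = E.strAddHom (f' m • ψW m)
    rw [Finsupp.linearCombination_single]
    show A.str (f' m) • ψT (M.str m) = E.str (f' m • ψW m)
    rw [E.str_smul, hψ]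
  · -- null
    intro (f : M.W →₀ A.W) hf
    show Finsupp.linearCombination A.W ψW f ∈ E.N
    rw [Finsupp.linearCombination_apply]
    refine Submodule.sum_mem _ ?_
    intro m _
    by_cases hm : m ∈ M.N
    · exact E.N.smul_mem _ (hψN m hm)
    · exact E.null_smul _ (hf m hm) _
  · intro t
    show Finsupp.linearCombination A.T ψT (Finsupp.single t 1) = ψT t
    rw [Finsupp.linearCombination_single, one_smul]
  · intro m
    show Finsupp.linearCombination A.W ψW (Finsupp.single m 1) = ψW m
    rw [Finsupp.linearCombination_single, one_smul]
  · -- uniqueness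
    rintro Φ ⟨hT, hW⟩
    refine CoisoRModHom.ext' ?_ ?_
    · refine Finsupp.lhom_ext' fun t => LinearMap.ext_ring ?_
      show Φ.T (Finsupp.single t 1) =
        Finsupp.linearCombination A.T ψT (Finsupp.single t 1)
      rw [Finsupp.linearCombination_single, one_smul]
      exact hT t
    · refine Finsupp.lhom_ext' fun m => LinearMap.ext_ring ?_
      show Φ.W (Finsupp.single m 1) =
        Finsupp.linearCombination A.W ψW (Finsupp.single m 1)
      rw [Finsupp.linearCombination_single, one_smul]
      exact hW m
end

section
/- Every SetTripleInj-free coisotropic A-module (i.e. A^(M) with ι_M : M_W → M_T injective) is regular projective: for every morphism Ψ : A^(M) → F and every regular epimorphism Φ : E → F of coisotropic A-modules there exists χ : A^(M) → E with Φ ∘ χ = Ψ. -/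
/-! Coisotropic index sets and their morphisms. -/

universe u

variable {k : Type u} [CommRing k]

variable {A : CoisoAlg k}

/-- every `SetTripleInj`-free coisotropic `A`-module, i.e.
`A^(M)` with `ι_M` injective, is regular projective. -/
theorem freeMod_regProjective (A : CoisoAlg k) (M : CoisoSet.{u})
    (hM : Function.Injective M.str) : RegProjective (freeMod A M) := by
  classical
  intro E F Φ Ψ hΦ
  obtain ⟨hT, hW, hN⟩ := hΦ
  -- choose preimages on the W level
  have hsingleN : ∀ m ∈ M.N, (Finsupp.single m (1 : A.W)) ∈ (freeMod A M).N := by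
    intro m hm m' hm'
    have hne : m ≠ m' := fun h => hm' (h ▸ hm)
    show (Finsupp.single m (1 : A.W)) m' ∈ A.N
    rw [Finsupp.single_apply, if_neg hne]
    exact A.N.zero_mem
  have he : ∀ m : M.W, ∃ e : E.W,
      Φ.W e = Ψ.W (Finsupp.single m 1) ∧ (m ∈ M.N → e ∈ E.N) := by
    intro m
    by_cases hm : m ∈ M.N
    · obtain ⟨x, hx, hxe⟩ := hN _ (Ψ.null _ (hsingleN m hm))
      exact ⟨x, hxe, fun _ => hx⟩
    · obtain ⟨x, hx⟩ := hW (Ψ.W (Finsupp.single m 1))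
      exact ⟨x, hx, fun h => absurd h hm⟩
  choose eW heW heWN using he
  have hstr_single : ∀ (m : M.W) (a : A.W),
      (freeMod A M).str (Finsupp.single m a) = Finsupp.single (M.str m) (A.str a) := by
    intro m a
    show (Finsupp.single m a).sum (fun m b => Finsupp.single (M.str m) (A.str b)) = _
    rw [Finsupp.sum_single_index]
    rw [map_zero, Finsupp.single_zero]
  have hΦEstr : ∀ m : M.W, Φ.T (E.str (eW m)) = Ψ.T (Finsupp.single (M.str m) 1) := by
    intro m
    rw [Φ.comm, heW]
    erw [← Ψ.comm]
    rw [hstr_single, map_one]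
  have heT : ∀ t : M.T, ∃ e : E.T,
      Φ.T e = Ψ.T (Finsupp.single t 1) ∧ (∀ m, M.str m = t → e = E.str (eW m)) := by
    intro t
    by_cases ht : ∃ m, M.str m = t
    · obtain ⟨m, rfl⟩ := ht
      exact ⟨E.str (eW m), hΦEstr m, fun m' hm' => by rw [hM hm']⟩
    · obtain ⟨x, hx⟩ := hT (Ψ.T (Finsupp.single t 1))
      exact ⟨x, hx, fun m hm => absurd ⟨m, hm⟩ ht⟩
  choose eT heT1 heT2 using heT
  refine ⟨⟨Finsupp.linearCombination A.T eT, Finsupp.linearCombination A.W eW, ?_, ?_⟩, ?_⟩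
  · -- comm
    intro f
    induction f using Finsupp.induction_linear with
    | zero => erw [(freeMod A M).str_zero, map_zero, map_zero, E.str_zero]
    | add f g hf hg =>
        erw [(freeMod A M).str_add, map_add, hf, hg, map_add, E.str_add]
    | single m a =>
        rw [hstr_single]
        erw [Finsupp.linearCombination_single, Finsupp.linearCombination_single]
        rw [heT2 (M.str m) m rfl, E.str_smul]
  · -- null
    intro f hf
    erw [Finsupp.linearCombination_apply]
    refine Submodule.sum_mem _ (fun m _ => ?_)
    by_cases hm : m ∈ M.N
    · exact E.N.smul_mem _ (heWN m hm)
    · exact E.null_smul _ (hf m hm) _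
  · -- factorization
    refine CoisoRModHom.ext' ?_ ?_
    · show Φ.T ∘ₗ _ = Ψ.T
      refine Finsupp.lhom_ext fun t a => ?_
      erw [LinearMap.comp_apply]
      erw [Finsupp.linearCombination_single]
      rw [map_smul, heT1]
      erw [← map_smul, Finsupp.smul_single, smul_eq_mul, mul_one]
      rfl
    · show Φ.W ∘ₗ _ = Ψ.W
      refine Finsupp.lhom_ext fun m a => ?_
      erw [LinearMap.comp_apply]
      erw [Finsupp.linearCombination_single]
      rw [map_smul, heW]
      erw [← map_smul, Finsupp.smul_single, smul_eq_mul, mul_one]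
      rfl
end

section
/- For every coisotropic A-module E there exists a coisotropic index set M with ι_M injective and a regular epimorphism A^(M) → E; i.e. the category of coisotropic A-modules has enough SetTripleInj-free objects. -/
/-! Coisotropic index sets and their morphisms. -/

universe u

variable {k : Type u} [CommRing k]

variable {A : CoisoAlg k}

/-- for every coisotropic `A`-module `E` there is a
coisotropic index set `M` with `ι_M` injective and a regular epimorphism
`A^(M) → E`: the category of coisotropic `A`-modules has enough
`SetTripleInj`-free objects. -/
theorem enough_free (A : CoisoAlg k) (E : CoisoRMod A) :
    ∃ M : CoisoSet.{u}, Function.Injective M.str ∧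
      ∃ Φ : CoisoRModHom (freeMod A M) E, IsRegEpiMod Φ := by
  classical
  refine ⟨⟨E.T ⊕ E.W, E.W, (E.N : Set E.W), Sum.inr⟩,
    fun a b h => Sum.inr.inj h, ?_⟩
  set M : CoisoSet.{u} := ⟨E.T ⊕ E.W, E.W, (E.N : Set E.W), Sum.inr⟩
  -- the additive hom version of E.str
  let strHom : E.W →+ E.T := ⟨⟨E.str, E.str_zero⟩, E.str_add⟩
  let vT : E.T ⊕ E.W → E.T := fun x => Sum.elim id E.str x
  let ΦT : (freeMod A M).T →ₗ[A.T] E.T := Finsupp.linearCombination A.T vT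
  let ΦW : (freeMod A M).W →ₗ[A.W] E.W := Finsupp.linearCombination A.W id
  have comm : ∀ f : (freeMod A M).W, ΦT ((freeMod A M).str f) = E.str (ΦW f) := by
    intro f
    show ΦT (f.sum fun m a => Finsupp.single (Sum.inr m) (A.str a)) =
      E.str (f.sum fun m a => a • (id m : E.W))
    erw [map_finsuppSum]
    have : E.str (f.sum fun m a => a • (id m : E.W)) =
        strHom (f.sum fun m a => a • (id m : E.W)) := rfl
    rw [this]
    erw [map_finsuppSum]
    refine Finsupp.sum_congr ?_
    intro m _
    show (Finsupp.linearCombination A.T vT) (Finsupp.single (Sum.inr m) (A.str ((show M.W →₀ A.W from f) m))) =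
      E.str (((show M.W →₀ A.W from f) m) • m)
    rw [Finsupp.linearCombination_single, E.str_smul]
    rfl
  have nullmap : ∀ x ∈ (freeMod A M).N, ΦW x ∈ E.N := by
    intro x hx
    show x.sum (fun m a => a • (id m : E.W)) ∈ E.N
    refine Submodule.finsuppSum_mem _ _ _ _ ?_
    intro m _
    by_cases hm : m ∈ E.N
    · exact E.N.smul_mem _ hm
    · exact E.null_smul _ (hx m hm) m
  refine ⟨⟨ΦT, ΦW, comm, nullmap⟩, ?_, ?_, ?_⟩
  · intro t
    refine ⟨Finsupp.single (Sum.inl t) 1, ?_⟩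
    show (Finsupp.linearCombination A.T vT) _ = t
    rw [Finsupp.linearCombination_single, one_smul]
    rfl
  · intro w
    refine ⟨Finsupp.single w 1, ?_⟩
    show (Finsupp.linearCombination A.W id) _ = w
    rw [Finsupp.linearCombination_single, one_smul]
    rfl
  · intro y hy
    refine ⟨Finsupp.single y 1, ?_, ?_⟩
    · intro m hm
      rw [Finsupp.single_apply]
      split_ifs with h
      · exact absurd (h ▸ hy) hm
      · exact A.N.zero_mem
    · show (Finsupp.linearCombination A.W id) _ = y
      rw [Finsupp.linearCombination_single, one_smul]
      rfl
end

section
/- Splitting Lemma for coisotropic modules: a short exact sequence 0 → E →^Φ F →^Ψ G → 0 of coisotropic A-modules splits (i.e. Ψ admits a section) if and only if it is isomorphic as a sequence to 0 → E → E ⊕ G → G → 0 with the canonical inclusion and projection; here E ⊕ G is the componentwise direct sum. -/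
/-! Coisotropic index sets and their morphisms. -/

universe u

variable {k : Type u} [CommRing k]

variable {A : CoisoAlg k}

/-- Short exactness of `0 → E →Φ F →Ψ P → 0`: `Φ` is a monomorphism (both
components injective), the image of `Φ` equals the kernel of `Ψ` as
coisotropic submodules (in particular `Φ_W(E_0) = ker Ψ_W ∩ F_0`), and `Ψ`
is a regular epimorphism. -/
def ShortExact {E F P : CoisoRMod A} (Φ : CoisoRModHom E F)
    (Ψ : CoisoRModHom F P) : Prop :=
  Function.Injective Φ.T ∧ Function.Injective Φ.W ∧
    LinearMap.range Φ.T = LinearMap.ker Ψ.T ∧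
    LinearMap.range Φ.W = LinearMap.ker Ψ.W ∧
    Φ.W '' (E.N : Set E.W) =
      (LinearMap.ker Ψ.W : Set F.W) ∩ (F.N : Set F.W) ∧
    IsRegEpiMod Ψ

/-- The componentwise direct sum of coisotropic modules. -/
def dsum (E G : CoisoRMod A) : CoisoRMod A where
  T := E.T × G.T
  W := E.W × G.W
  N := E.N.prod G.N
  null_smul := fun a ha x =>
    ⟨E.null_smul a ha x.1, G.null_smul a ha x.2⟩
  str := fun x => (E.str x.1, G.str x.2)
  str_add := fun x y => by
    simp only [Prod.fst_add, Prod.snd_add, E.str_add, G.str_add]; rfl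
  str_smul := fun a x => by
    simp only [Prod.smul_fst, Prod.smul_snd, E.str_smul, G.str_smul]; rfl

/-- The canonical inclusion `E → E ⊕ G`. -/
def dsumInl (E G : CoisoRMod A) : CoisoRModHom E (dsum E G) where
  T := LinearMap.inl A.T E.T G.T
  W := LinearMap.inl A.W E.W G.W
  comm := fun x => by
    show (E.str x, (0 : G.T)) = (E.str x, G.str 0)
    rw [G.str_zero]
  null := fun x hx => ⟨hx, G.N.zero_mem⟩

/-- The canonical projection `E ⊕ G → G`. -/
def dsumPr (E G : CoisoRMod A) : CoisoRModHom (dsum E G) G where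
  T := LinearMap.snd A.T E.T G.T
  W := LinearMap.snd A.W E.W G.W
  comm := fun _ => rfl
  null := fun x hx => hx.2

/-- The canonical inclusion `G → E ⊕ G`. -/
def dsumInr (E G : CoisoRMod A) : CoisoRModHom G (dsum E G) where
  T := LinearMap.inr A.T E.T G.T
  W := LinearMap.inr A.W E.W G.W
  comm := fun x => by
    show ((0 : E.T), G.str x) = (E.str 0, G.str x)
    rw [E.str_zero]
  null := fun x hx => ⟨E.N.zero_mem, hx⟩

/-- splitting lemma: a short exact sequence
`0 → E →Φ F →Ψ G → 0` of coisotropic `A`-modules splits (i.e. `Ψ` admits a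
section) iff it is isomorphic as a sequence to
`0 → E → E ⊕ G → G → 0` with the canonical inclusion and projection. -/
theorem splitting_lemma {E F G : CoisoRMod A} (Φ : CoisoRModHom E F)
    (Ψ : CoisoRModHom F G) (h : ShortExact Φ Ψ) :
    (∃ s : CoisoRModHom G F, Ψ.comp s = CoisoRModHom.id G) ↔
      ∃ θ : CoisoRModHom F (dsum E G), IsIsoMod θ ∧
        θ.comp Φ = dsumInl E G ∧ (dsumPr E G).comp θ = Ψ := by
  obtain ⟨hTinj, hWinj, hTr, hWr, hNimg, hepi⟩ := h
  constructor
  · rintro ⟨s, hs⟩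
    have hsT : ∀ g, Ψ.T (s.T g) = g :=
      fun g => DFunLike.congr_fun (congrArg CoisoRModHom.T hs) g
    have hsW : ∀ g, Ψ.W (s.W g) = g :=
      fun g => DFunLike.congr_fun (congrArg CoisoRModHom.W hs) g
    have hΨΦT : ∀ e, Ψ.T (Φ.T e) = 0 := fun e => by
      have : Φ.T e ∈ LinearMap.ker Ψ.T := by rw [← hTr]; exact ⟨e, rfl⟩
      exact LinearMap.mem_ker.mp this
    have hΨΦW : ∀ e, Ψ.W (Φ.W e) = 0 := fun e => by
      have : Φ.W e ∈ LinearMap.ker Ψ.W := by rw [← hWr]; exact ⟨e, rfl⟩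
      exact LinearMap.mem_ker.mp this
    set eT : (dsum E G).T →ₗ[A.T] F.T := Φ.T.coprod s.T with heT
    set eW : (dsum E G).W →ₗ[A.W] F.W := Φ.W.coprod s.W with heW
    have eTapp : ∀ (a : E.T) (b : G.T), eT (a, b) = Φ.T a + s.T b := fun _ _ => rfl
    have eWapp : ∀ (a : E.W) (b : G.W), eW (a, b) = Φ.W a + s.W b := fun _ _ => rfl
    have kerT : ∀ p : E.T × G.T, eT p = 0 → p = 0 := by
      rintro ⟨a, b⟩ hp
      have hb : b = 0 := by
        have := congrArg Ψ.T hp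
        rw [eTapp, map_add, hΨΦT, hsT, zero_add, map_zero] at this; exact this
      subst hb
      have ha : Φ.T a = 0 := by rw [eTapp, map_zero, add_zero] at hp; exact hp
      have : a = 0 := hTinj (by rw [ha, map_zero])
      simp [this]
    have kerW : ∀ p : E.W × G.W, eW p = 0 → p = 0 := by
      rintro ⟨a, b⟩ hp
      have hb : b = 0 := by
        have := congrArg Ψ.W hp
        rw [eWapp, map_add, hΨΦW, hsW, zero_add, map_zero] at this; exact this
      subst hb
      have ha : Φ.W a = 0 := by rw [eWapp, map_zero, add_zero] at hp; exact hp
      have : a = 0 := hWinj (by rw [ha, map_zero])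
      simp [this]
    have injT : Function.Injective eT := by
      intro x y hxy
      have h0 : eT (x - y) = 0 := by rw [map_sub, hxy, sub_self]
      have := kerT _ h0
      exact sub_eq_zero.mp this
    have injW : Function.Injective eW := by
      intro x y hxy
      have h0 : eW (x - y) = 0 := by rw [map_sub, hxy, sub_self]
      have := kerW _ h0
      exact sub_eq_zero.mp this
    have surjT : Function.Surjective eT := by
      intro f
      have hker : f - s.T (Ψ.T f) ∈ LinearMap.ker Ψ.T := by
        simp [LinearMap.mem_ker, map_sub, hsT]
      rw [← hTr] at hker
      obtain ⟨a, ha⟩ := hker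
      exact ⟨(a, Ψ.T f), by rw [eTapp, ha, sub_add_cancel]⟩
    have surjW : Function.Surjective eW := by
      intro f
      have hker : f - s.W (Ψ.W f) ∈ LinearMap.ker Ψ.W := by
        simp [LinearMap.mem_ker, map_sub, hsW]
      rw [← hWr] at hker
      obtain ⟨a, ha⟩ := hker
      exact ⟨(a, Ψ.W f), by rw [eWapp, ha, sub_add_cancel]⟩
    let equivT := LinearEquiv.ofBijective eT ⟨injT, surjT⟩
    let equivW := LinearEquiv.ofBijective eW ⟨injW, surjW⟩
    have heTapp : ∀ p, equivT p = eT p := fun _ => rfl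
    have heWapp : ∀ p, equivW p = eW p := fun _ => rfl
    -- the inverse morphism θ' : E ⊕ G → F
    have commE : ∀ x : (dsum E G).W, eT ((dsum E G).str x) = F.str (eW x) := by
      rintro ⟨a, b⟩
      show Φ.T (E.str a) + s.T (G.str b) = F.str (Φ.W a + s.W b)
      rw [F.str_add, Φ.comm, s.comm]
    have nullW : ∀ f ∈ F.N, equivW.symm f ∈ (dsum E G).N := by
      intro f hf
      set p := equivW.symm f with hpdef
      have hep : eW p = f := equivW.apply_symm_apply f
      have hb : p.2 = Ψ.W f := by
        have := congrArg Ψ.W hep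
        have h2 : Ψ.W (Φ.W p.1) + Ψ.W (s.W p.2) = Ψ.W f := by
          rw [← map_add, show Φ.W p.1 + s.W p.2 = eW p from (eWapp p.1 p.2).symm]
          exact this
        rw [hΨΦW, hsW, zero_add] at h2
        exact h2
      have hbN : p.2 ∈ G.N := hb ▸ Ψ.null f hf
      have hΦp : Φ.W p.1 = f - s.W p.2 :=
        eq_sub_of_add_eq hep
      have hmem : Φ.W p.1 ∈ (LinearMap.ker Ψ.W : Set F.W) ∩ (F.N : Set F.W) := by
        constructor
        · show Φ.W p.1 ∈ LinearMap.ker Ψ.W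
          exact LinearMap.mem_ker.mpr (hΨΦW p.1)
        · rw [hΦp]
          exact F.N.sub_mem hf (s.null _ hbN)
      rw [← hNimg] at hmem
      obtain ⟨a', ha'N, ha'⟩ := hmem
      have : a' = p.1 := hWinj ha'
      exact ⟨this ▸ ha'N, hbN⟩
    refine ⟨⟨equivT.symm.toLinearMap, equivW.symm.toLinearMap, ?_, nullW⟩,
      ⟨⟨eT, eW, commE, ?_⟩, ?_, ?_⟩, ?_, ?_⟩
    · -- comm for θ
      intro f
      show equivT.symm (F.str f) = (dsum E G).str (equivW.symm f)
      rw [LinearEquiv.symm_apply_eq, heTapp, commE]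
      congr 1
      exact (equivW.apply_symm_apply f).symm
    · -- null for θ' : E ⊕ G → F
      rintro ⟨a, b⟩ ⟨ha, hb⟩
      exact F.N.add_mem (Φ.null _ ha) (s.null _ hb)
    · -- θ.comp θ' = id
      refine CoisoRModHom.ext' ?_ ?_
      · exact LinearMap.ext fun x => equivT.symm_apply_apply x
      · exact LinearMap.ext fun x => equivW.symm_apply_apply x
    · -- θ'.comp θ = id
      refine CoisoRModHom.ext' ?_ ?_
      · exact LinearMap.ext fun x => equivT.apply_symm_apply x
      · exact LinearMap.ext fun x => equivW.apply_symm_apply x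
    · -- θ.comp Φ = dsumInl
      refine CoisoRModHom.ext' ?_ ?_
      · apply LinearMap.ext; intro x
        show equivT.symm (Φ.T x) = (x, 0)
        refine equivT.symm_apply_eq.mpr ?_
        show Φ.T x = Φ.T x + s.T 0
        rw [map_zero, add_zero]
      · apply LinearMap.ext; intro x
        show equivW.symm (Φ.W x) = (x, 0)
        refine equivW.symm_apply_eq.mpr ?_
        show Φ.W x = Φ.W x + s.W 0
        rw [map_zero, add_zero]
    · -- dsumPr.comp θ = Ψ
      refine CoisoRModHom.ext' ?_ ?_
      · apply LinearMap.ext; intro f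
        show (equivT.symm f : E.T × G.T).2 = Ψ.T f
        set p := equivT.symm f with hpdef
        have hep : eT p = f := equivT.apply_symm_apply f
        have := congrArg Ψ.T hep
        have h2 : Ψ.T (Φ.T p.1) + Ψ.T (s.T p.2) = Ψ.T f := by
          rw [← map_add]; rw [show Φ.T p.1 + s.T p.2 = eT p from (eTapp p.1 p.2).symm]
          exact this
        rw [hΨΦT, hsT, zero_add] at h2
        exact h2
      · apply LinearMap.ext; intro f
        show (equivW.symm f : E.W × G.W).2 = Ψ.W f
        set p := equivW.symm f with hpdef
        have hep : eW p = f := equivW.apply_symm_apply f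
        have := congrArg Ψ.W hep
        have h2 : Ψ.W (Φ.W p.1) + Ψ.W (s.W p.2) = Ψ.W f := by
          rw [← map_add, show Φ.W p.1 + s.W p.2 = eW p from (eWapp p.1 p.2).symm]
          exact this
        rw [hΨΦW, hsW, zero_add] at h2
        exact h2
  · rintro ⟨θ, ⟨θ', hθθ', hθ'θ⟩, hθΦ, hprθ⟩
    refine ⟨θ'.comp (dsumInr E G), ?_⟩
    have hT : ∀ p, θ.T (θ'.T p) = p :=
      fun p => DFunLike.congr_fun (congrArg CoisoRModHom.T hθθ') p
    have hW : ∀ p, θ.W (θ'.W p) = p :=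
      fun p => DFunLike.congr_fun (congrArg CoisoRModHom.W hθθ') p
    have hΨT : ∀ f, Ψ.T f = (θ.T f).2 :=
      fun f => (DFunLike.congr_fun (congrArg CoisoRModHom.T hprθ) f).symm
    have hΨW : ∀ f, Ψ.W f = (θ.W f).2 :=
      fun f => (DFunLike.congr_fun (congrArg CoisoRModHom.W hprθ) f).symm
    refine CoisoRModHom.ext' ?_ ?_
    · apply LinearMap.ext; intro g
      show Ψ.T (θ'.T ((0 : E.T), g)) = g
      rw [hΨT]; exact congrArg Prod.snd (hT ((0, g) : (dsum E G).T))
    · apply LinearMap.ext; intro g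
      show Ψ.W (θ'.W ((0 : E.W), g)) = g
      rw [hΨW]; exact congrArg Prod.snd (hW ((0, g) : (dsum E G).W))
end

section
/- Dual basis characterization: a coisotropic A-module P is regular projective with generating set M (a coisotropic index set with ι_M injective) if and only if there exist families (e_n)_{n∈M_T} in P_T, (f_m)_{m∈M_W} in P_W, functionals (e^n)_{n∈M_T} in Hom_{A_T}(P_T, A_T) and (f^m)_{m∈M_W} in Hom_{A_W}(P_W, A_W) such that x_T = Σ_n e_n e^n(x_T) and x_W = Σ_m f_m f^m(x_W) with only finitely many nonzero terms for each fixed element, and additionally: e_{ι_M(m)} = ι_P(f_m) for m ∈ M_W; f_m ∈ P_0 for m ∈ M_0; e^{ι_M(m)} ∘ ι_P = ι_A ∘ f^m for m ∈ M_W; e^n ∘ ι_P = 0 for n ∈ M_T \ ι_M(M_W); and f^m(x) ∈ A_0 for x ∈ P_0, m ∈ M_W \ M_0. -/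
/-! Coisotropic index sets and their morphisms. -/

universe u

variable {k : Type u} [CommRing k]

variable {A : CoisoAlg k}

theorem CoisoRMod.str_sub (E : CoisoRMod A) (x y : E.W) :
    E.str (x - y) = E.str x - E.str y :=
  (AddMonoidHom.mk' E.str E.str_add).map_sub x y

theorem freeMod_str_def (M : CoisoSet.{u}) (g : M.W →₀ A.W) :
    (freeMod A M).str g = g.sum fun m a => Finsupp.single (M.str m) (A.str a) := rfl

theorem freeMod_mem_N (M : CoisoSet.{u}) (g : M.W →₀ A.W) :
    g ∈ (freeMod A M).N ↔ ∀ m, m ∉ M.N → g m ∈ A.N := Iff.rfl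

theorem sum_single_apply_str {M : CoisoSet.{u}} (hM : Function.Injective M.str)
    (g : M.W →₀ A.W) (m : M.W) :
    (g.sum fun m' a => Finsupp.single (M.str m') (A.str a)) (M.str m) = A.str (g m) := by
  classical
  rw [Finsupp.sum_apply, Finsupp.sum, Finset.sum_eq_single m]
  · rw [Finsupp.single_apply, if_pos rfl]
  · intro b _ hb
    rw [Finsupp.single_apply, if_neg fun h => hb (hM h)]
  · intro hm
    rw [Finsupp.notMem_support_iff.mp hm, map_zero, Finsupp.single_zero,
      Finsupp.coe_zero, Pi.zero_apply]

theorem sum_single_apply_notin {M : CoisoSet.{u}} (g : M.W →₀ A.W) (n : M.T)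
    (hn : n ∉ Set.range M.str) :
    (g.sum fun m' a => Finsupp.single (M.str m') (A.str a)) n = 0 := by
  classical
  rw [Finsupp.sum_apply, Finsupp.sum]
  refine Finset.sum_eq_zero fun m _ => ?_
  rw [Finsupp.single_apply, if_neg fun h => hn ⟨m, h⟩]

/-- The "coordinate" map of a dual basis. -/
noncomputable def dualRep {R : Type u} [Ring R] {V : Type u} [AddCommGroup V] [Module R V]
    {ι : Type u} (eS : ι → (V →ₗ[R] R)) (h : ∀ x, {i | eS i x ≠ 0}.Finite) :
    V →ₗ[R] (ι →₀ R) where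
  toFun x := ⟨(h x).toFinset, fun i => eS i x, fun i => (h x).mem_toFinset⟩
  map_add' x y := Finsupp.ext fun i => by
    simp only [Finsupp.coe_mk, Finsupp.add_apply, map_add]
  map_smul' a x := Finsupp.ext fun i => by
    simp only [Finsupp.coe_mk, Finsupp.smul_apply, RingHom.id_apply, map_smul]

theorem dualRep_apply {R : Type u} [Ring R] {V : Type u} [AddCommGroup V] [Module R V]
    {ι : Type u} (eS : ι → (V →ₗ[R] R)) (h : ∀ x, {i | eS i x ≠ 0}.Finite)
    (x : V) (i : ι) : dualRep eS h x i = eS i x := rfl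

theorem dualRep_total {R : Type u} [Ring R] {V : Type u} [AddCommGroup V] [Module R V]
    {ι : Type u} (e : ι → V) (eS : ι → (V →ₗ[R] R)) (h : ∀ x, {i | eS i x ≠ 0}.Finite)
    (hx : ∀ x : V, ∑ᶠ i, eS i x • e i = x) (x : V) :
    Finsupp.linearCombination R e (dualRep eS h x) = x := by
  classical
  have hsub : (Function.support fun i => eS i x • e i) ⊆ ↑(dualRep eS h x).support := by
    intro i hi
    simp only [Function.mem_support] at hi
    refine Finset.mem_coe.mpr (Finsupp.mem_support_iff.mpr fun h0 => hi ?_)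
    rw [show eS i x = 0 from h0, zero_smul]
  rw [Finsupp.linearCombination_apply, Finsupp.sum]
  conv_rhs => rw [← hx x]
  rw [finsum_eq_finset_sum_of_support_subset _ hsub]
  rfl

/-- A split surjection of coisotropic modules exhibits its source as a
direct sum of its target and the kernel. -/
theorem split_iso {F P : CoisoRMod A} (p : CoisoRModHom F P) (s : CoisoRModHom P F)
    (hT : ∀ x, p.T (s.T x) = x) (hW : ∀ x, p.W (s.W x) = x) :
    ∃ (E : CoisoRMod A) (θ : CoisoRModHom F (dsum P E)), IsIsoMod θ := by
  have hkT : ∀ y : F.T, p.T (y - s.T (p.T y)) = 0 := fun y => by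
    rw [map_sub, hT, sub_self]
  have hkW : ∀ y : F.W, p.W (y - s.W (p.W y)) = 0 := fun y => by
    rw [map_sub, hW, sub_self]
  refine ⟨{ T := ↥(LinearMap.ker p.T)
            W := ↥(LinearMap.ker p.W)
            N := Submodule.comap (LinearMap.ker p.W).subtype F.N
            null_smul := fun a ha y => F.null_smul a ha y.1
            str := fun y => ⟨F.str y.1, by
              rw [LinearMap.mem_ker, p.comm, LinearMap.mem_ker.mp y.2, P.str_zero]⟩
            str_add := fun x y => Subtype.ext (by
              show F.str (↑x + ↑y) = F.str ↑x + F.str ↑y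
              exact F.str_add _ _)
            str_smul := fun a y => Subtype.ext (by
              show F.str (a • ↑y) = A.str a • F.str ↑y
              exact F.str_smul _ _) },
          { T := LinearMap.prod p.T
              (LinearMap.codRestrict (LinearMap.ker p.T)
                (LinearMap.id - s.T ∘ₗ p.T) fun y => LinearMap.mem_ker.mpr (hkT y))
            W := LinearMap.prod p.W
              (LinearMap.codRestrict (LinearMap.ker p.W)
                (LinearMap.id - s.W ∘ₗ p.W) fun y => LinearMap.mem_ker.mpr (hkW y))
            comm := fun g => by
              refine Prod.ext (p.comm g) (Subtype.ext ?_)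
              show F.str g - s.T (p.T (F.str g)) = F.str (g - s.W (p.W g))
              rw [CoisoRMod.str_sub, p.comm, s.comm]
            null := fun g hg =>
              ⟨p.null g hg, by
                show g - s.W (p.W g) ∈ F.N
                exact Submodule.sub_mem _ hg (s.null _ (p.null g hg))⟩ },
          ⟨{ T := s.T.coprod (LinearMap.ker p.T).subtype
             W := s.W.coprod (LinearMap.ker p.W).subtype
             comm := fun y => by
               show s.T (P.str y.1) + F.str y.2.1 = F.str (s.W y.1 + y.2.1)
               rw [s.comm, F.str_add]
             null := fun y hy => Submodule.add_mem _ (s.null y.1 hy.1) hy.2 },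
           ?_, ?_⟩⟩
  · refine CoisoRModHom.ext' ?_ ?_
    · refine LinearMap.ext fun y => ?_
      obtain ⟨x, k⟩ := y
      refine Prod.ext ?_ (Subtype.ext ?_)
      · show p.T (s.T x + k.1) = x
        rw [map_add, hT, LinearMap.mem_ker.mp k.2, add_zero]
      · show (s.T x + k.1) - s.T (p.T (s.T x + k.1)) = k.1
        rw [map_add, hT, LinearMap.mem_ker.mp k.2, add_zero, add_sub_cancel_left]
    · refine LinearMap.ext fun y => ?_
      obtain ⟨x, k⟩ := y
      refine Prod.ext ?_ (Subtype.ext ?_)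
      · show p.W (s.W x + k.1) = x
        rw [map_add, hW, LinearMap.mem_ker.mp k.2, add_zero]
      · show (s.W x + k.1) - s.W (p.W (s.W x + k.1)) = k.1
        rw [map_add, hW, LinearMap.mem_ker.mp k.2, add_zero, add_sub_cancel_left]
  · refine CoisoRModHom.ext' ?_ ?_
    · refine LinearMap.ext fun y => ?_
      show s.T (p.T y) + (y - s.T (p.T y)) = y
      abel
    · refine LinearMap.ext fun y => ?_
      show s.W (p.W y) + (y - s.W (p.W y)) = y
      abel

/-- dual basis lemma: a coisotropic `A`-module `P` is
regular projective with generating set `M` (a coisotropic index set with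
`ι_M` injective), i.e. `A^(M) ≅ P ⊕ E` for some `E`, if and only if there
is a dual basis `(e_n, e^n)_{n ∈ M_T}` for `P_T` and `(f_m, f^m)_{m ∈ M_W}`
for `P_W` subject to the compatibility conditions (1)–(5) of the paper.
(With Lean's left-module conventions the paper's `e_n e^n(x)` reads
`e^n(x) • e_n`.) -/
theorem dual_basis_lemma (P : CoisoRMod A) (M : CoisoSet.{u})
    (hM : Function.Injective M.str) :
    (∃ (E : CoisoRMod A)
      (θ : CoisoRModHom (freeMod A M) (dsum P E)), IsIsoMod θ) ↔
    ∃ (e : M.T → P.T) (f : M.W → P.W)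
      (eS : M.T → (P.T →ₗ[A.T] A.T)) (fS : M.W → (P.W →ₗ[A.W] A.W)),
      (∀ x : P.T,
        {n : M.T | eS n x ≠ 0}.Finite ∧ ∑ᶠ n : M.T, eS n x • e n = x) ∧
      (∀ x : P.W,
        {m : M.W | fS m x ≠ 0}.Finite ∧ ∑ᶠ m : M.W, fS m x • f m = x) ∧
      (∀ m : M.W, e (M.str m) = P.str (f m)) ∧
      (∀ m ∈ M.N, f m ∈ P.N) ∧
      (∀ (m : M.W) (x : P.W), eS (M.str m) (P.str x) = A.str (fS m x)) ∧
      (∀ n : M.T, n ∉ Set.range M.str → ∀ x : P.W, eS n (P.str x) = 0) ∧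
      (∀ m : M.W, m ∉ M.N → ∀ x ∈ P.N, fS m x ∈ A.N) := by
  classical
  constructor
  · rintro ⟨E, θ, Ψ, hθΨ, hΨθ⟩
    have hT : ∀ y, θ.T (Ψ.T y) = y := fun y =>
      LinearMap.congr_fun (congrArg CoisoRModHom.T hθΨ) y
    have hW : ∀ y, θ.W (Ψ.W y) = y := fun y =>
      LinearMap.congr_fun (congrArg CoisoRModHom.W hθΨ) y
    refine ⟨fun n => (θ.T (Finsupp.single n 1)).1,
            fun m => (θ.W (Finsupp.single m 1)).1,
            fun n => Finsupp.lapply n ∘ₗ Ψ.T ∘ₗ LinearMap.inl A.T P.T E.T,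
            fun m => Finsupp.lapply m ∘ₗ Ψ.W ∘ₗ LinearMap.inl A.W P.W E.W,
            ?_, ?_, ?_, ?_, ?_, ?_, ?_⟩
    · intro x
      set g : M.T →₀ A.T := Ψ.T (x, 0) with hg
      have hmem : ∀ n, (Finsupp.lapply n ∘ₗ Ψ.T ∘ₗ LinearMap.inl A.T P.T E.T) x = g n :=
        fun n => rfl
      constructor
      · refine Set.Finite.subset g.support.finite_toSet fun n hn => ?_
        exact Finsupp.mem_support_iff.mpr (by rw [← hmem n]; exact hn)
      · have hrep : θ.T g = g.sum fun n a => a • θ.T (Finsupp.single n 1) := by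
          conv_lhs => rw [← Finsupp.sum_single g]
          refine (map_finsuppSum θ.T g Finsupp.single).trans ?_
          refine Finsupp.sum_congr fun n _ => ?_
          rw [← Finsupp.smul_single_one]
          exact map_smul θ.T (g n) (Finsupp.single n 1)
        have hx : (θ.T g).1 = x := by rw [hg]; exact congrArg Prod.fst (hT (x, 0))
        have hfin : ∑ᶠ n : M.T,
            (Finsupp.lapply n ∘ₗ Ψ.T ∘ₗ LinearMap.inl A.T P.T E.T) x •
              (θ.T (Finsupp.single n 1)).1
            = ∑ n ∈ g.support, g n • (θ.T (Finsupp.single n 1)).1 := by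
          refine finsum_eq_finset_sum_of_support_subset _ fun n hn => ?_
          simp only [Function.mem_support, hmem n] at hn
          by_contra h
          exact hn (by rw [Finsupp.notMem_support_iff.mp h, zero_smul])
        rw [hfin, ← hx, hrep]
        rw [Finsupp.sum]
        exact (Prod.fst_sum (s := g.support)
          (f := fun a => (g a • θ.T (Finsupp.single a 1) : P.T × E.T))).symm
    · intro x
      set g : M.W →₀ A.W := Ψ.W (x, 0) with hg
      have hmem : ∀ m, (Finsupp.lapply m ∘ₗ Ψ.W ∘ₗ LinearMap.inl A.W P.W E.W) x = g m :=
        fun m => rfl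
      constructor
      · refine Set.Finite.subset g.support.finite_toSet fun m hm => ?_
        exact Finsupp.mem_support_iff.mpr (by rw [← hmem m]; exact hm)
      · have hrep : θ.W g = g.sum fun m a => a • θ.W (Finsupp.single m 1) := by
          conv_lhs => rw [← Finsupp.sum_single g]
          refine (map_finsuppSum θ.W g Finsupp.single).trans ?_
          refine Finsupp.sum_congr fun m _ => ?_
          rw [← Finsupp.smul_single_one]
          exact map_smul θ.W (g m) (Finsupp.single m 1)
        have hx : (θ.W g).1 = x := by rw [hg]; exact congrArg Prod.fst (hW (x, 0))
        have hfin : ∑ᶠ m : M.W,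
            (Finsupp.lapply m ∘ₗ Ψ.W ∘ₗ LinearMap.inl A.W P.W E.W) x •
              (θ.W (Finsupp.single m 1)).1
            = ∑ m ∈ g.support, g m • (θ.W (Finsupp.single m 1)).1 := by
          refine finsum_eq_finset_sum_of_support_subset _ fun m hm => ?_
          simp only [Function.mem_support, hmem m] at hm
          by_contra h
          exact hm (by rw [Finsupp.notMem_support_iff.mp h, zero_smul])
        rw [hfin, ← hx, hrep]
        rw [Finsupp.sum]
        exact (Prod.fst_sum (s := g.support)
          (f := fun a => (g a • θ.W (Finsupp.single a 1) : P.W × E.W))).symm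
    · intro m
      have h1 : (freeMod A M).str (Finsupp.single m (1 : A.W))
          = Finsupp.single (M.str m) (1 : A.T) := by
        rw [freeMod_str_def, Finsupp.sum_single_index (by simp), map_one]
      have h2 := θ.comm (Finsupp.single m (1 : A.W))
      rw [h1] at h2
      exact congrArg Prod.fst h2
    · intro m hm
      have hmem : Finsupp.single m (1 : A.W) ∈ (freeMod A M).N := by
        intro m' hm'
        rcases eq_or_ne m m' with h | h
        · exact absurd (h ▸ hm) hm'
        · rw [Finsupp.single_apply, if_neg h]
          exact A.N.zero_mem
      exact (θ.null _ hmem).1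
    · intro m x
      have h2 := Ψ.comm (x, (0 : E.W))
      have h0 : (dsum P E).str ((x, 0) : P.W × E.W) = ((P.str x, 0) : P.T × E.T) := by
        show (P.str x, E.str 0) = _
        rw [E.str_zero]
      rw [h0] at h2
      exact (congrArg (fun g : M.T →₀ A.T => g (M.str m)) h2).trans
        (sum_single_apply_str hM (Ψ.W (x, 0)) m)
    · intro n hn x
      have h2 := Ψ.comm (x, (0 : E.W))
      have h0 : (dsum P E).str ((x, 0) : P.W × E.W) = ((P.str x, 0) : P.T × E.T) := by
        show (P.str x, E.str 0) = _
        rw [E.str_zero]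
      rw [h0] at h2
      exact (congrArg (fun g : M.T →₀ A.T => g n) h2).trans
        (sum_single_apply_notin (Ψ.W (x, 0)) n hn)
    · intro m hm x hx
      have hmem : ((x, 0) : P.W × E.W) ∈ (dsum P E).N := ⟨hx, E.N.zero_mem⟩
      exact Ψ.null _ hmem m hm
  · rintro ⟨e, f, eS, fS, h1, h2, h3, h4, h5, h6, h7⟩
    have hfinT : ∀ x : P.T, {n : M.T | eS n x ≠ 0}.Finite := fun x => (h1 x).1
    have hfinW : ∀ x : P.W, {m : M.W | fS m x ≠ 0}.Finite := fun x => (h2 x).1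
    set sT : P.T →ₗ[A.T] (M.T →₀ A.T) := dualRep eS hfinT with hsT
    set sW : P.W →ₗ[A.W] (M.W →₀ A.W) := dualRep fS hfinW with hsW
    have hpsT : ∀ x, Finsupp.linearCombination A.T e (sT x) = x :=
      dualRep_total e eS hfinT fun x => (h1 x).2
    have hpsW : ∀ x, Finsupp.linearCombination A.W f (sW x) = x :=
      dualRep_total f fS hfinW fun x => (h2 x).2
    have hpcT : ∀ g : M.W →₀ A.W,
        Finsupp.linearCombination A.T e ((freeMod A M).str g)
          = P.str (Finsupp.linearCombination A.W f g) := by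
      intro g
      have hL : Finsupp.linearCombination A.T e ((freeMod A M).str g)
          = ∑ m ∈ g.support, A.str (g m) • e (M.str m) := by
        rw [freeMod_str_def, map_finsuppSum, Finsupp.sum]
        refine Finset.sum_congr rfl fun m _ => ?_
        rw [Finsupp.linearCombination_single]
      have hR : P.str (Finsupp.linearCombination A.W f g)
          = ∑ m ∈ g.support, P.str (g m • f m) := by
        rw [Finsupp.linearCombination_apply, Finsupp.sum]
        exact map_sum (AddMonoidHom.mk' P.str P.str_add) _ _
      rw [hL, hR]
      refine Finset.sum_congr rfl fun m _ => ?_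
      rw [h3, ← P.str_smul]
    have hscT : ∀ x : P.W, sT (P.str x) = (freeMod A M).str (sW x) := by
      intro x
      have hd := freeMod_str_def M (sW x)
      refine Finsupp.ext fun n => ?_
      rw [hd]
      by_cases hn : n ∈ Set.range M.str
      · obtain ⟨m, rfl⟩ := hn
        rw [sum_single_apply_str hM (sW x) m]
        show eS (M.str m) (P.str x) = A.str ((sW x) m)
        exact h5 m x
      · rw [sum_single_apply_notin (sW x) n hn]
        exact h6 n hn x
    have hpnull : ∀ g ∈ (freeMod A M).N, Finsupp.linearCombination A.W f g ∈ P.N := by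
      intro g hg
      change ∑ i ∈ (show M.W →₀ A.W from g).support, (show M.W →₀ A.W from g) i • f i ∈ P.N
      refine Submodule.sum_mem _ fun m _ => ?_
      by_cases hm : m ∈ M.N
      · exact P.N.smul_mem _ (h4 m hm)
      · exact P.null_smul _ (hg m hm) _
    have hsnull : ∀ x ∈ P.N, sW x ∈ (freeMod A M).N := fun x hx m hm => h7 m hm x hx
    have hkT : ∀ y : M.T →₀ A.T,
        Finsupp.linearCombination A.T e
          (y - sT (Finsupp.linearCombination A.T e y)) = 0 := fun y => by
      rw [map_sub, hpsT, sub_self]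
    have hkW : ∀ y : M.W →₀ A.W,
        Finsupp.linearCombination A.W f
          (y - sW (Finsupp.linearCombination A.W f y)) = 0 := fun y => by
      rw [map_sub, hpsW, sub_self]
    exact split_iso
      ⟨Finsupp.linearCombination A.T e, Finsupp.linearCombination A.W f, hpcT, hpnull⟩
      ⟨sT, sW, hscT, hsnull⟩ hpsT hpsW
end

section
/- If P is a regular projective coisotropic A-module with generating set M (ι_M injective, M finite), then the reduced module P_red = P_W / P_0 is a projective A_red-module, where A_red = A_W / A_0, with generating set M_W \ M_0. In particular (A^(M))_red ≅ (A_red)^(M_W \ M_0). -/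
/-! Coisotropic index sets and their morphisms. -/

universe u

variable {k : Type u} [CommRing k]

variable {A : CoisoAlg k}

/-- if `P` is a regular projective coisotropic `A`-module
with finite generating set `M` (with `ι_M` injective), then the reduced
module `P_red = P_W / P_0` is a projective `A_red = A_W / A_0`-module with
generating set `M_W \ M_0`; in particular
`(A^(M))_red ≅ (A_red)^(M_W \ M_0)`.

Projectivity of `P_red` over `A_red` is expressed by a (finite) dual basis:
elements `p_m ∈ P_W` and `A_W`-linear functionals `ℓ_m : P_W → A_W`
mapping `P_0` into `A_0` (hence descending to `A_red`-linear functionals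
`P_red → A_red`), indexed by `M_W \ M_0`, which form a dual basis modulo
the null components.  The isomorphism `(A^(M))_red ≅ (A_red)^(M_W \ M_0)`
is an `A_W`-linear equivalence of the quotient modules, given by reducing
coefficients. -/
theorem red_of_regProjective (A : CoisoAlg k) (M : CoisoSet.{u})
    (hM : Function.Injective M.str) (hTfin : Finite M.T)
    (hWfin : Finite M.W) (P : CoisoRMod A)
    (hP : ∃ (E : CoisoRMod A)
      (θ : CoisoRModHom (freeMod A M) (dsum P E)), IsIsoMod θ) :
    (∃ (p : {m : M.W // m ∉ M.N} → P.W)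
      (ℓ : {m : M.W // m ∉ M.N} → (P.W →ₗ[A.W] A.W)),
      (∀ m, ∀ x ∈ P.N, ℓ m x ∈ A.N) ∧
      (∀ x : P.W, x - ∑ᶠ m, ℓ m x • p m ∈ P.N)) ∧
    ∃ eq : ((freeMod A M).W ⧸ (freeMod A M).N) ≃ₗ[A.W]
        ({m : M.W // m ∉ M.N} →₀ (A.W ⧸ (A.N : Submodule A.W A.W))),
      ∀ (f : M.W →₀ A.W) (m : {m : M.W // m ∉ M.N}),
        eq (Submodule.Quotient.mk f) m = Submodule.Quotient.mk (f m.val) := by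
  classical
  letI : Fintype M.W := Fintype.ofFinite _
  letI : Fintype {m : M.W // m ∉ M.N} := Fintype.ofFinite _
  obtain ⟨E, θ, Ψ, hθΨ, hΨθ⟩ := hP
  have hinv : ∀ y, θ.W (Ψ.W y) = y := by
    intro y
    have h := congrArg CoisoRModHom.W hθΨ
    exact DFunLike.congr_fun h y
  constructor
  · -- dual basis part
    refine ⟨fun m => (θ.W (Finsupp.single m.val 1)).1,
      fun m => Finsupp.lapply m.val ∘ₗ Ψ.W ∘ₗ LinearMap.inl A.W P.W E.W, ?_, ?_⟩
    · intro m x hx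
      have h0 : ((x, 0) : P.W × E.W) ∈ (dsum P E).N := ⟨hx, Submodule.zero_mem _⟩
      have hN : Ψ.W ((x, 0) : P.W × E.W) ∈ (freeMod A M).N := Ψ.null _ h0
      exact hN m.val m.property
    · intro x
      set f : M.W →₀ A.W := Ψ.W ((x, 0) : P.W × E.W) with hf
      have hfx : θ.W f = (x, 0) := hinv _
      set p' : M.W → P.W := fun m => (θ.W (Finsupp.single m 1)).1 with hp'
      have hfdecomp : f = ∑ m : M.W, f m • Finsupp.single m (1 : A.W) := by
        ext m'
        rw [Finsupp.finset_sum_apply]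
        simp [Finsupp.single_apply, smul_eq_mul]
      have hx1 : x = ∑ m : M.W, f m • p' m := by
        have h2 : θ.W f = ∑ m : M.W, f m • θ.W (Finsupp.single m 1) := by
          conv_lhs => rw [hfdecomp]
          refine (map_sum θ.W _ _).trans ?_
          exact Finset.sum_congr rfl (fun m _ => map_smul _ _ _)
        have h3 := congrArg Prod.fst h2
        rw [hfx] at h3
        have h3' : x = ∑ c : M.W, (f c • θ.W (Finsupp.single c 1)).1 := h3.trans Prod.fst_sum
        rw [h3']
        exact Finset.sum_congr rfl (fun m _ => rfl)
      have hsub : (∑ m : {m : M.W // m ∉ M.N},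
          (Finsupp.lapply m.val ∘ₗ Ψ.W ∘ₗ LinearMap.inl A.W P.W E.W) x • p' m.val)
          = ∑ m ∈ Finset.univ.filter (fun m => m ∉ M.N), f m • p' m := by
        refine Eq.trans ?_ (Finset.sum_subtype (F := Fintype.ofFinite _)
          (Finset.univ.filter (fun m => m ∉ M.N))
          (p := fun m => m ∉ M.N) (by simp) (fun m => f m • p' m)).symm
        exact Finset.sum_congr rfl (fun m _ => rfl)
      rw [finsum_eq_sum_of_fintype, hsub]
      have hsplit := Finset.sum_filter_add_sum_filter_not Finset.univ
        (fun m => m ∉ M.N) (fun m => f m • p' m)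
      have hxdiff : x - ∑ m ∈ Finset.univ.filter (fun m => m ∉ M.N), f m • p' m
          = ∑ m ∈ Finset.univ.filter (fun m => ¬ m ∉ M.N), f m • p' m := by
        rw [hx1]
        rw [← hsplit]
        abel
      rw [hxdiff]
      refine Submodule.sum_mem _ (fun m hm => ?_)
      have hmN : m ∈ M.N := not_not.mp (Finset.mem_filter.mp hm).2
      have hsingle : Finsupp.single m (1 : A.W) ∈ (freeMod A M).N := by
        intro m' hm'
        rw [Finsupp.single_apply]
        by_cases h : m = m'
        · exact absurd (h ▸ hmN) hm'
        · simp [h]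
      have := θ.null _ hsingle
      exact Submodule.smul_mem _ _ this.1
  · -- quotient iso part
    let φ : (M.W →₀ A.W) →ₗ[A.W]
        ({m : M.W // m ∉ M.N} →₀ (A.W ⧸ (A.N : Submodule A.W A.W))) :=
      Finsupp.mapRange.linearMap (A.N.mkQ) ∘ₗ
        Finsupp.lcomapDomain Subtype.val Subtype.val_injective
    have hφapp : ∀ (f : M.W →₀ A.W) (m : {m : M.W // m ∉ M.N}),
        φ f m = Submodule.Quotient.mk (f m.val) := by
      intro f m
      simp [φ, Finsupp.lcomapDomain, Finsupp.comapDomain_apply]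
    have hker : (freeMod A M).N = LinearMap.ker φ := by
      ext f
      constructor
      · intro h
        apply (LinearMap.mem_ker (f := φ)).mpr
        ext m
        refine (hφapp f m).trans ?_
        simpa [Submodule.Quotient.mk_eq_zero] using h m.val m.property
      · intro h m hm
        have h0 := DFunLike.congr_fun ((LinearMap.mem_ker (f := φ)).mp h) ⟨m, hm⟩
        have h2 := (hφapp f ⟨m, hm⟩).symm.trans (h0.trans (Finsupp.zero_apply))
        simpa [Submodule.Quotient.mk_eq_zero] using h2
    have hsurj : Function.Surjective φ := by
      intro g
      induction g using Finsupp.induction with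
      | zero => exact ⟨0, map_zero φ⟩
      | single_add m q g hm hq ih =>
        obtain ⟨f', hf'⟩ := ih
        obtain ⟨a, ha⟩ := Submodule.Quotient.mk_surjective _ q
        refine ⟨Finsupp.single m.val a + f', ?_⟩
        rw [map_add, hf']
        congr 1
        ext m'
        rw [hφapp, Finsupp.single_apply, Finsupp.single_apply]
        by_cases h : m = m'
        · subst h; simp [ha]
        · have h' : m.val ≠ m'.val := fun hc => h (Subtype.ext hc)
          simp [h, h']
    let ψ := Submodule.liftQ (freeMod A M).N φ hker.le
    have hinjψ : Function.Injective ψ := by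
      rw [← LinearMap.ker_eq_bot]
      exact Submodule.ker_liftQ_eq_bot _ _ _ hker.ge
    have hsurjψ : Function.Surjective ψ := by
      intro g
      obtain ⟨f, hf⟩ := hsurj g
      exact ⟨Submodule.Quotient.mk f, by rwa [show ψ (Submodule.Quotient.mk f) = φ f from Submodule.liftQ_apply _ _ _]⟩
    refine ⟨LinearEquiv.ofBijective ψ ⟨hinjψ, hsurjψ⟩, fun f m => ?_⟩
    show ψ (Submodule.Quotient.mk f) m = _
    rw [show ψ (Submodule.Quotient.mk f) = φ f from Submodule.liftQ_apply _ _ _]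
    exact hφapp f m
end

section
/- Let A be a (classical) unital associative algebra and E a projective right A-module. Then the coisotropic module (E, E, 0) over the coisotropic algebra (A, A, 0) (with identity structure maps) is regular projective. -/
/-! Coisotropic index sets and their morphisms. -/

universe u

variable {k : Type u} [CommRing k]

variable {A : CoisoAlg k}

/-- A classical unital `k`-algebra `R` as the coisotropic algebra
`(R, R, 0)` with identity structure map. -/
@[reducible] def classicalAlg (k : Type u) [CommRing k] (R : Type u) [Ring R]
    [Algebra k R] : CoisoAlg k where
  T := R
  W := R
  N := ⊥
  N_mul_right := fun x hx a => by
    have hx' : x = (0 : R) := (Submodule.mem_bot R).mp hx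
    exact (Submodule.mem_bot R).mpr (by rw [hx', zero_mul])
  str := AlgHom.id k R

/-- A classical module `E` over `R` as the coisotropic module `(E, E, 0)`
over `(R, R, 0)`. -/
@[reducible] def classicalMod (k : Type u) [CommRing k] (R : Type u) [Ring R]
    [Algebra k R] (E : Type u) [AddCommGroup E] [Module R E] :
    CoisoRMod (classicalAlg k R) where
  T := E
  W := E
  addT := inferInstance
  addW := inferInstance
  modT := inferInstanceAs (Module R E)
  modW := inferInstanceAs (Module R E)
  N := ⊥
  null_smul := fun a ha x => by
    have ha' : a = 0 := (Submodule.mem_bot _).mp ha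
    exact (Submodule.mem_bot _).mpr (by rw [ha']; exact zero_smul _ x)
  str := fun x => x
  str_add := fun _ _ => rfl
  str_smul := fun _ _ => rfl

/-- a classical projective module `E` over a classical
algebra `R`, regarded as the coisotropic module `(E, E, 0)` over the
coisotropic algebra `(R, R, 0)`, is regular projective. -/
theorem classical_projective_regProjective (k : Type u) [CommRing k]
    (R : Type u) [Ring R] [Algebra k R] (E : Type u) [AddCommGroup E]
    [Module R E] (hE : Module.Projective R E) :
    RegProjective (classicalMod k R E) := by
  intro E' F Φ Ψ hΦ
  obtain ⟨-, hW, -⟩ := hΦ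
  letI : Module R E'.W := E'.modW
  letI : Module R F.W := F.modW
  letI : Module R E'.T := E'.modT
  letI : Module R F.T := F.modT
  -- lift Ψ.W along the surjective linear map Φ.W using classical projectivity
  obtain ⟨w, hw⟩ := Module.projective_lifting_property (R := R) Φ.W Ψ.W hW
  -- the str map of E' is R-linear since the algebra structure map is the identity
  have strE' : ∀ (a : R) (x : E'.W), E'.str (a • x) = a • E'.str x :=
    fun a x => E'.str_smul a x
  refine ⟨⟨{ toFun := fun x => E'.str (w x)
             map_add' := fun x y => by
               show E'.str (w (x + y)) = E'.str (w x) + E'.str (w y)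
               rw [w.map_add, E'.str_add]
             map_smul' := fun a x => by
               show E'.str (w (a • x)) = a • E'.str (w x)
               rw [w.map_smul]
               exact strE' a (w x) },
           w, fun x => rfl, fun x hx => ?_⟩, ?_⟩
  · have hx' : x = 0 := (Submodule.mem_bot _).mp hx
    subst hx'
    simp only [map_zero]
    exact E'.N.zero_mem
  · refine CoisoRModHom.ext' ?_ ?_
    · refine LinearMap.ext fun x => ?_
      show Φ.T (E'.str (w x)) = Ψ.T x
      rw [Φ.comm]
      exact (congrArg F.str (LinearMap.congr_fun hw x)).trans (Ψ.comm x).symm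
    · exact hw
end
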